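/- Let p, q be probability densities on Θ with the same support such that E_{θ∼q}[(p(θ)/q(θ))^2] < ∞. Let θ_0 ∼ p and θ_1,…,θ_M be i.i.d. from q, and define Δ_M = −E[ log( (1/(M+1)) Σ_{k=0}^M p(θ_k)/q(θ_k) ) ]. Then Δ_M → 0 as M → ∞; equivalently, D_4(p,q,M) → KL(p‖q). -/

import Mathlib

open MeasureTheory Real Filter

noncomputable section

/-- The density `θ ↦ p(θ_0) ∏_{k=1}^M q(θ_k)` on `Θ^{M+1}`:
the law of one draw from `p` together with `M` i.i.d. draws from `q`. -/
def numDens {Θ : Type*} (p q : Θ → ℝ) (M : ℕ) : (Fin (M + 1) → Θ) → ℝ :=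
  fun v => p (v 0) * ∏ k ∈ Finset.univ.erase (0 : Fin (M + 1)), q (v k)

/-- `Δ_M = −E[ log( (1/(M+1)) Σ_{k=0}^M p(θ_k)/q(θ_k) ) ]` where `θ_0 ∼ p` and
`θ_1,…,θ_M` are i.i.d. from `q`. -/
def Delta {Θ : Type*} [MeasurableSpace Θ] (μ : Measure Θ) (p q : Θ → ℝ) (M : ℕ) : ℝ :=
  -∫ v, numDens p q M v *
      Real.log ((1 / (M + 1 : ℝ)) * ∑ k, p (v k) / q (v k))
    ∂(Measure.pi fun _ : Fin (M + 1) => μ)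

/-- if `p`, `q` have the same support and `E_{θ∼q}[(p/q)²] < ∞`
then `Δ_M → 0` as `M → ∞` (equivalently, `D_4(p,q,M) → KL(p‖q)`). -/
theorem stmt8 {Θ : Type*} [MeasurableSpace Θ] (μ : Measure Θ) [SigmaFinite μ]
    (p q : Θ → ℝ)
    (hpm : Measurable p) (hqm : Measurable q)
    (hp0 : ∀ x, 0 ≤ p x) (hq0 : ∀ x, 0 ≤ q x)
    (hp1 : ∫ x, p x ∂μ = 1) (hq1 : ∫ x, q x ∂μ = 1)
    (hsupp : ∀ᵐ x ∂μ, (p x = 0 ↔ q x = 0))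
    (hmom2 : Integrable (fun x => (p x) ^ 2 / q x) μ)
    (hint : ∀ M, Integrable
      (fun v => numDens p q M v *
        Real.log ((1 / (M + 1 : ℝ)) * ∑ k, p (v k) / q (v k)))
      (Measure.pi fun _ : Fin (M + 1) => μ)) :
    Tendsto (fun M => Delta μ p q M) atTop (nhds 0) := by
  classical
  -- basic one-dimensional integrability facts
  have hPint : Integrable p μ := by
    by_contra hc; rw [integral_undef hc] at hp1; norm_num at hp1
  have hQint : Integrable q μ := by
    by_contra hc; rw [integral_undef hc] at hq1; norm_num at hq1
  have hpr_eq : (fun x => p x * (p x / q x)) = fun x => p x ^ 2 / q x := by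
    funext x; rw [pow_two, mul_div_assoc]
  have hprI : Integrable (fun x => p x * (p x / q x)) μ := by rw [hpr_eq]; exact hmom2
  have hqr_ae : (fun x => q x * (p x / q x)) =ᵐ[μ] p := by
    filter_upwards [hsupp] with x hx
    by_cases hq : q x = 0
    · simp [hq, hx.mpr hq]
    · field_simp
  have hqrI : Integrable (fun x => q x * (p x / q x)) μ := hPint.congr hqr_ae.symm
  have hqrint : ∫ x, q x * (p x / q x) ∂μ = 1 := by
    rw [integral_congr_ae hqr_ae, hp1]
  set C : ℝ := ∫ x, p x ^ 2 / q x ∂μ with hC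
  have hprint : ∫ x, p x * (p x / q x) ∂μ = C := by rw [hpr_eq]
  -- the two key bounds, uniform in M
  have key : ∀ M : ℕ,
      -((C - 1) * (1 / (M + 1 : ℝ))) ≤ Delta μ p q M ∧ Delta μ p q M ≤ 0 := by
    intro M
    letI : MeasureSpace Θ := ⟨μ⟩
    haveI : SigmaFinite (volume : Measure Θ) := ‹_›
    set n : ℕ := M + 1 with hn
    set pm : Measure (Fin n → Θ) := Measure.pi fun _ : Fin n => μ with hpm2
    have hM1 : (M : ℝ) + 1 ≠ 0 := by positivity
    -- a.e., every coordinate satisfies the support condition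
    have hgood : ∀ᵐ v ∂pm, ∀ k, (p (v k) = 0 ↔ q (v k) = 0) := by
      rw [MeasureTheory.ae_all_iff]
      intro k
      have h1 : MeasurableSet {x : Θ | p x = 0} := hpm (measurableSet_singleton 0)
      have h2 : MeasurableSet {x : Θ | q x = 0} := hqm (measurableSet_singleton 0)
      have hB0 : μ {x : Θ | ¬ (p x = 0 ↔ q x = 0)} = 0 := ae_iff.mp hsupp
      rw [ae_iff]
      have hset : {v : Fin n → Θ | ¬ (p (v k) = 0 ↔ q (v k) = 0)}
          = Set.pi Set.univ (Function.update (fun _ : Fin n => (Set.univ : Set Θ)) k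
              {x : Θ | ¬ (p x = 0 ↔ q x = 0)}) := by
        ext v
        simp only [Set.mem_setOf_eq, Set.mem_pi, Set.mem_univ, forall_true_left]
        constructor
        · intro h i
          by_cases hik : i = k
          · subst hik; simpa [Function.update_self] using h
          · simp [Function.update_of_ne hik]
        · intro h
          have := h k
          simpa [Function.update_self] using this
      rw [hset, Measure.pi_pi]
      refine Finset.prod_eq_zero (Finset.mem_univ k) ?_
      simp [Function.update_self, hB0]
    -- nonnegativity of numDens
    have hnd0 : ∀ v : Fin n → Θ, 0 ≤ numDens p q M v := fun v =>
      mul_nonneg (hp0 _) (Finset.prod_nonneg fun k _ => hq0 _)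
    -- product representation of numDens
    set G : Fin n → Θ → ℝ := fun k x => if k = 0 then p x else q x with hG
    have hnum_eq : ∀ v : Fin n → Θ, numDens p q M v = ∏ k, G k (v k) := by
      intro v
      rw [numDens, ← Finset.mul_prod_erase Finset.univ (fun k => G k (v k))
        (Finset.mem_univ (0 : Fin n))]
      refine congrArg₂ (· * ·) (by simp [hG]) ?_
      exact Finset.prod_congr rfl fun k hk => by
        simp [hG, Finset.ne_of_mem_erase hk]
    have hGint : ∀ k, Integrable (G k) μ := by
      intro k; by_cases h : k = 0 <;> simp [hG, h, hPint, hQint]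
    have hnumInt : Integrable (numDens p q M) pm := by
      have := MeasureTheory.Integrable.fintype_prod (f := G) hGint
      exact this.congr (ae_of_all _ fun v => (hnum_eq v).symm)
    have hnumint1 : ∫ v, numDens p q M v ∂pm = 1 := by
      have h : (∫ v, ∏ k, G k (v k) ∂pm) = ∏ k, ∫ x, G k x ∂μ :=
        MeasureTheory.integral_fintype_prod_eq_prod G
      rw [show (fun v => numDens p q M v) = fun v => ∏ k, G k (v k) from funext hnum_eq, h]
      refine Finset.prod_eq_one fun k _ => ?_
      by_cases h : k = 0 <;> simp [hG, h, hp1, hq1]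
    -- the terms numDens * r_k as products
    set H : Fin n → Fin n → Θ → ℝ :=
      fun k i x => G i x * (if i = k then p x / q x else 1) with hH
    have hHint : ∀ k i, Integrable (H k i) μ := by
      intro k i
      by_cases hik : i = k
      · by_cases hi0 : i = 0
        · have hfe : H k i = fun x => p x * (p x / q x) := by
            funext x; simp only [hH, hG]; rw [if_pos hi0, if_pos hik]
          rw [hfe]; exact hprI
        · have hfe : H k i = fun x => q x * (p x / q x) := by
            funext x; simp only [hH, hG]; rw [if_neg hi0, if_pos hik]
          rw [hfe]; exact hqrI
      · by_cases hi0 : i = 0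
        · have hfe : H k i = fun x => p x * 1 := by
            funext x; simp only [hH, hG]; rw [if_pos hi0, if_neg hik]
          rw [hfe]; simpa using hPint
        · have hfe : H k i = fun x => q x * 1 := by
            funext x; simp only [hH, hG]; rw [if_neg hi0, if_neg hik]
          rw [hfe]; simpa using hQint
    have hTeq : ∀ (k : Fin n) (v : Fin n → Θ),
        numDens p q M v * (p (v k) / q (v k)) = ∏ i, H k i (v i) := by
      intro k v
      rw [hnum_eq]
      simp only [hH]
      rw [Finset.prod_mul_distrib]
      refine congrArg₂ (· * ·) rfl ?_
      symm
      rw [Finset.prod_ite_eq' Finset.univ k fun i => p (v i) / q (v i)]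
      simp
    have hTint : ∀ k : Fin n,
        Integrable (fun v => numDens p q M v * (p (v k) / q (v k))) pm := by
      intro k
      have := MeasureTheory.Integrable.fintype_prod (f := H k) (hHint k)
      exact this.congr (ae_of_all _ fun v => (hTeq k v).symm)
    have hTintegral : ∀ k : Fin n,
        ∫ v, numDens p q M v * (p (v k) / q (v k)) ∂pm = if k = 0 then C else 1 := by
      intro k
      have h : (∫ v, ∏ i, H k i (v i) ∂pm) = ∏ i, ∫ x, H k i x ∂μ :=
        MeasureTheory.integral_fintype_prod_eq_prod (H k)
      rw [show (fun v => numDens p q M v * (p (v k) / q (v k)))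
          = fun v => ∏ i, H k i (v i) from funext (hTeq k), h]
      have hfac : ∀ i, ∫ x, H k i x ∂μ = if i = k then (if k = 0 then C else 1) else 1 := by
        intro i
        by_cases hik : i = k
        · rw [if_pos hik]
          by_cases hk0 : k = 0
          · rw [if_pos hk0]
            have hfe : H k i = fun x => p x * (p x / q x) := by
              funext x; simp only [hH, hG]
              rw [if_pos (hik.trans hk0), if_pos hik]
            rw [hfe]; exact hprint
          · rw [if_neg hk0]
            have hi0 : ¬ i = 0 := fun h => hk0 (hik.symm.trans h)
            have hfe : H k i = fun x => q x * (p x / q x) := by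
              funext x; simp only [hH, hG]
              rw [if_neg hi0, if_pos hik]
            rw [hfe]; exact hqrint
        · rw [if_neg hik]
          by_cases hi0 : i = 0
          · have hfe : H k i = fun x => p x * 1 := by
              funext x; simp only [hH, hG]; rw [if_pos hi0, if_neg hik]
            rw [hfe]; simp only [mul_one]; exact hp1
          · have hfe : H k i = fun x => q x * 1 := by
              funext x; simp only [hH, hG]; rw [if_neg hi0, if_neg hik]
            rw [hfe]; simp only [mul_one]; exact hq1
      rw [Finset.prod_congr rfl fun i _ => hfac i]
      simp
    -- integral of numDens * A
    have hndA_eq : (fun v : Fin n → Θ =>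
        numDens p q M v * ((1 / (M + 1 : ℝ)) * ∑ k, p (v k) / q (v k)))
        = fun v => (1 / (M + 1 : ℝ)) * ∑ k, numDens p q M v * (p (v k) / q (v k)) := by
      funext v
      rw [Finset.mul_sum, Finset.mul_sum, Finset.mul_sum]
      exact Finset.sum_congr rfl fun k _ => by ring
    have hndA_int : Integrable (fun v : Fin n → Θ =>
        numDens p q M v * ((1 / (M + 1 : ℝ)) * ∑ k, p (v k) / q (v k))) pm := by
      rw [hndA_eq]
      exact (integrable_finset_sum _ fun k _ => hTint k).const_mul _
    have hsumC : (∑ k : Fin n, if k = (0 : Fin n) then C else 1) = C + M := by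
      have h1 : ∀ k : Fin n, (if k = (0 : Fin n) then C else 1)
          = (if k = (0 : Fin n) then C - 1 else 0) + 1 := by
        intro k; split <;> ring
      simp_rw [h1, Finset.sum_add_distrib, Finset.sum_ite_eq', Finset.mem_univ, if_pos,
        Finset.sum_const, Finset.card_univ, Fintype.card_fin, nsmul_eq_mul, mul_one]
      push_cast
      rw [show (n : ℝ) = (M : ℝ) + 1 by exact_mod_cast hn]
      ring
    have hndA_integral : ∫ v, numDens p q M v *
        ((1 / (M + 1 : ℝ)) * ∑ k, p (v k) / q (v k)) ∂pm
        = (1 / (M + 1 : ℝ)) * (C + M) := by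
      rw [hndA_eq, integral_const_mul, integral_finset_sum _ fun k _ => hTint k]
      rw [Finset.sum_congr rfl fun k _ => hTintegral k, hsumC]
    -- numDens vanishes a.e. where the ratio sum vanishes
    have hvanish : ∀ v : Fin n → Θ, (∀ k, (p (v k) = 0 ↔ q (v k) = 0)) →
        (∑ k, p (v k) / q (v k)) = 0 → numDens p q M v = 0 := by
      intro v hv hS
      have hterm : p (v 0) / q (v 0) = 0 := by
        have := (Finset.sum_eq_zero_iff_of_nonneg
          (fun k _ => div_nonneg (hp0 _) (hq0 _))).mp hS (0 : Fin n) (Finset.mem_univ _)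
        exact this
      have hp0v : p (v 0) = 0 := by
        rcases div_eq_zero_iff.mp hterm with h | h
        · exact h
        · exact (hv 0).mpr h
      simp [numDens, hp0v]
    ------------------------------------------------------------------
    -- UPPER bound for the integral : ∫ f ≤ (1/(M+1)) (C+M) - 1
    ------------------------------------------------------------------
    have hup : ∫ v, numDens p q M v *
        Real.log ((1 / (M + 1 : ℝ)) * ∑ k, p (v k) / q (v k)) ∂pm
        ≤ (1 / (M + 1 : ℝ)) * (C + M) - 1 := by
      have hmono : (fun v : Fin n → Θ => numDens p q M v *
          Real.log ((1 / (M + 1 : ℝ)) * ∑ k, p (v k) / q (v k)))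
          ≤ᵐ[pm] fun v => numDens p q M v *
            (((1 / (M + 1 : ℝ)) * ∑ k, p (v k) / q (v k)) - 1) := by
        filter_upwards [hgood] with v hv
        set S : ℝ := ∑ k, p (v k) / q (v k) with hS
        have hS0 : 0 ≤ S := Finset.sum_nonneg fun k _ => div_nonneg (hp0 _) (hq0 _)
        by_cases hSz : S = 0
        · have : numDens p q M v = 0 := hvanish v hv hSz
          simp [this]
        · have hSpos : 0 < S := lt_of_le_of_ne hS0 (Ne.symm hSz)
          have hApos : 0 < (1 / (M + 1 : ℝ)) * S := by positivity
          exact mul_le_mul_of_nonneg_left (Real.log_le_sub_one_of_pos hApos) (hnd0 v)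
      have hInt2 : Integrable (fun v : Fin n → Θ => numDens p q M v *
          (((1 / (M + 1 : ℝ)) * ∑ k, p (v k) / q (v k)) - 1)) pm := by
        have heq : (fun v : Fin n → Θ => numDens p q M v *
            (((1 / (M + 1 : ℝ)) * ∑ k, p (v k) / q (v k)) - 1))
            = fun v => numDens p q M v *
              ((1 / (M + 1 : ℝ)) * ∑ k, p (v k) / q (v k)) - numDens p q M v := by
          funext v; ring
        rw [heq]
        exact hndA_int.sub hnumInt
      calc ∫ v, numDens p q M v *
          Real.log ((1 / (M + 1 : ℝ)) * ∑ k, p (v k) / q (v k)) ∂pm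
          ≤ ∫ v, numDens p q M v *
            (((1 / (M + 1 : ℝ)) * ∑ k, p (v k) / q (v k)) - 1) ∂pm :=
            integral_mono_ae (hint M) hInt2 hmono
        _ = (1 / (M + 1 : ℝ)) * (C + M) - 1 := by
            have heq : (fun v : Fin n → Θ => numDens p q M v *
                (((1 / (M + 1 : ℝ)) * ∑ k, p (v k) / q (v k)) - 1))
                = fun v => numDens p q M v *
                  ((1 / (M + 1 : ℝ)) * ∑ k, p (v k) / q (v k)) - numDens p q M v := by
              funext v; ring
            rw [heq, integral_sub hndA_int hnumInt, hndA_integral, hnumint1]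
    ------------------------------------------------------------------
    -- LOWER bound for the integral : 0 ≤ ∫ f
    ------------------------------------------------------------------
    -- the symmetrized functions g j
    set g : Fin n → (Fin n → Θ) → ℝ := fun j v => (∏ k, q (v k)) *
      ((p (v j) / q (v j)) / ∑ k, p (v k) / q (v k)) with hg
    have hQpos : ∀ v : Fin n → Θ, 0 ≤ ∏ k, q (v k) :=
      fun v => Finset.prod_nonneg fun k _ => hq0 _
    have hratio01 : ∀ (v : Fin n → Θ) (j : Fin n),
        0 ≤ (p (v j) / q (v j)) / ∑ k, p (v k) / q (v k) ∧
        (p (v j) / q (v j)) / (∑ k, p (v k) / q (v k)) ≤ 1 := by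
      intro v j
      set S : ℝ := ∑ k, p (v k) / q (v k) with hS
      have hS0 : 0 ≤ S := Finset.sum_nonneg fun k _ => div_nonneg (hp0 _) (hq0 _)
      by_cases hSz : S = 0
      · simp [hSz]
      · have hSpos : 0 < S := lt_of_le_of_ne hS0 (Ne.symm hSz)
        constructor
        · exact div_nonneg (div_nonneg (hp0 _) (hq0 _)) hS0
        · rw [div_le_one hSpos]
          exact Finset.single_le_sum (fun k _ => div_nonneg (hp0 _) (hq0 _))
            (Finset.mem_univ j)
      
    have hQint_pi : Integrable (fun v : Fin n → Θ => ∏ k, q (v k)) pm :=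
      MeasureTheory.Integrable.fintype_prod (f := fun _ : Fin n => q) (fun _ => hQint)
    have hQintegral : ∫ v, ∏ k, q (v k) ∂pm = 1 := by
      have h : (∫ v, ∏ k, (fun _ : Fin n => q) k (v k) ∂pm) = ∏ k : Fin n, ∫ x, q x ∂μ :=
        MeasureTheory.integral_fintype_prod_eq_prod (fun _ => q)
      rw [show (fun v : Fin n → Θ => ∏ k, q (v k))
          = fun v => ∏ k, (fun _ : Fin n => q) k (v k) from rfl, h]
      simp [hq1]
    have hgmeas : ∀ j, AEStronglyMeasurable (g j) pm := by
      intro j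
      have m1 : Measurable fun v : Fin n → Θ => ∏ k, q (v k) :=
        Finset.measurable_prod _ fun k _ => hqm.comp (measurable_pi_apply k)
      have m2 : Measurable fun v : Fin n → Θ => ∑ k, p (v k) / q (v k) :=
        Finset.measurable_sum _ fun k _ =>
          (hpm.comp (measurable_pi_apply k)).div (hqm.comp (measurable_pi_apply k))
      have m3 : Measurable fun v : Fin n → Θ => p (v j) / q (v j) :=
        (hpm.comp (measurable_pi_apply j)).div (hqm.comp (measurable_pi_apply j))
      exact (m1.mul (m3.div m2)).aestronglyMeasurable
    have hgint : ∀ j, Integrable (g j) pm := by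
      intro j
      refine hQint_pi.mono (hgmeas j) (ae_of_all _ fun v => ?_)
      rw [Real.norm_eq_abs, Real.norm_eq_abs,
        abs_of_nonneg (mul_nonneg (hQpos v) (hratio01 v j).1), abs_of_nonneg (hQpos v)]
      exact mul_le_of_le_one_right (hQpos v) (hratio01 v j).2
    -- swap symmetry
    have hswap : ∀ j : Fin n, ∫ v, g j v ∂pm = ∫ v, g 0 v ∂pm := by
      intro j
      set e : Fin n ≃ Fin n := Equiv.swap (0 : Fin n) j with he
      have hcoord : ∀ (v : Fin n → Θ) (i : Fin n),
          (MeasurableEquiv.piCongrLeft (fun _ => Θ) e) v i = v (e.symm i) := by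
        intro v i
        have h2 := Equiv.piCongrLeft_apply_apply (fun _ => Θ) e v (e.symm i)
        rwa [Equiv.apply_symm_apply] at h2
      have hfun : ∀ v : Fin n → Θ,
          g 0 ((MeasurableEquiv.piCongrLeft (fun _ => Θ) e) v) = g j v := by
        intro v
        simp only [hg]
        congr 1
        · rw [Finset.prod_congr rfl fun k _ => by rw [hcoord v k]]
          exact Equiv.prod_comp e.symm fun k => q (v k)
        · congr 1
          · rw [hcoord v 0]
            have : e.symm (0 : Fin n) = j := by
              rw [he, Equiv.symm_swap, Equiv.swap_apply_left]
            rw [this]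
          · rw [Finset.sum_congr rfl fun k _ => by rw [hcoord v k]]
            exact Equiv.sum_comp e.symm fun k => p (v k) / q (v k)
      have hmp : (∫ v, g 0 ((MeasurableEquiv.piCongrLeft (fun _ => Θ) e) v) ∂pm)
          = ∫ v, g 0 v ∂pm :=
        (measurePreserving_piCongrLeft (fun _ : Fin n => μ) e).integral_comp' (g 0)
      simp_rw [hfun] at hmp
      exact hmp
    -- sum of the g j is bounded by the product density of q
    have hsum_le : ∫ v, (∑ j, g j v) ∂pm ≤ 1 := by
      rw [← hQintegral]
      refine integral_mono (integrable_finset_sum _ fun j _ => hgint j) hQint_pi ?_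
      intro v
      simp only [hg, ← Finset.mul_sum]
      refine mul_le_of_le_one_right (hQpos v) ?_
      rw [← Finset.sum_div]
      set S : ℝ := ∑ k, p (v k) / q (v k) with hS
      by_cases hSz : S = 0
      · simp [hSz]
      · rw [div_self hSz]
    have hg0_le : (M + 1 : ℝ) * ∫ v, g 0 v ∂pm ≤ 1 := by
      have hsum_eq : ∫ v, (∑ j, g j v) ∂pm = (M + 1 : ℝ) * ∫ v, g 0 v ∂pm := by
        rw [integral_finset_sum _ fun j _ => hgint j,
          Finset.sum_congr rfl fun j _ => hswap j, Finset.sum_const, Finset.card_univ,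
          Fintype.card_fin, nsmul_eq_mul]
        push_cast
        rw [show (n : ℝ) = (M : ℝ) + 1 by exact_mod_cast hn]
      linarith [hsum_le, hsum_eq]
    -- numDens * A⁻¹ equals (M+1) * g 0 a.e.
    have hndAinv_ae : (fun v : Fin n → Θ => numDens p q M v *
        ((1 / (M + 1 : ℝ)) * ∑ k, p (v k) / q (v k))⁻¹)
        =ᵐ[pm] fun v => (M + 1 : ℝ) * g 0 v := by
      filter_upwards [hgood] with v hv
      have hinv : ((1 / (M + 1 : ℝ)) * ∑ k, p (v k) / q (v k))⁻¹
          = (M + 1 : ℝ) * (∑ k, p (v k) / q (v k))⁻¹ := by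
        rw [mul_inv, one_div, inv_inv]
      by_cases hq0v : q (v 0) = 0
      · have hp0v : p (v 0) = 0 := (hv 0).mpr hq0v
        have hQ0 : (∏ k, q (v k)) = 0 := Finset.prod_eq_zero (Finset.mem_univ 0) hq0v
        simp [numDens, hp0v, hg, hQ0]
      · have hnumd : numDens p q M v = (p (v 0) / q (v 0)) * ∏ k, q (v k) := by
          rw [numDens, ← Finset.mul_prod_erase Finset.univ (fun k => q (v k))
            (Finset.mem_univ (0 : Fin n))]
          field_simp
          ring
        rw [hnumd, hinv]
        simp only [hg, div_eq_mul_inv]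
        ring
    have hndAinv_int : Integrable (fun v : Fin n → Θ => numDens p q M v *
        ((1 / (M + 1 : ℝ)) * ∑ k, p (v k) / q (v k))⁻¹) pm :=
      (((hgint 0).const_mul ((M : ℝ) + 1)).congr hndAinv_ae.symm)
    have hndAinv_integral : ∫ v, numDens p q M v *
        ((1 / (M + 1 : ℝ)) * ∑ k, p (v k) / q (v k))⁻¹ ∂pm ≤ 1 := by
      rw [integral_congr_ae hndAinv_ae, integral_const_mul]
      exact hg0_le
    have hlow : 0 ≤ ∫ v, numDens p q M v *
        Real.log ((1 / (M + 1 : ℝ)) * ∑ k, p (v k) / q (v k)) ∂pm := by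
      have hmono : (fun v : Fin n → Θ => numDens p q M v *
          (1 - ((1 / (M + 1 : ℝ)) * ∑ k, p (v k) / q (v k))⁻¹))
          ≤ᵐ[pm] fun v => numDens p q M v *
            Real.log ((1 / (M + 1 : ℝ)) * ∑ k, p (v k) / q (v k)) := by
        filter_upwards [hgood] with v hv
        set S : ℝ := ∑ k, p (v k) / q (v k) with hS
        have hS0 : 0 ≤ S := Finset.sum_nonneg fun k _ => div_nonneg (hp0 _) (hq0 _)
        by_cases hSz : S = 0
        · have : numDens p q M v = 0 := hvanish v hv hSz
          simp [this]
        · have hSpos : 0 < S := lt_of_le_of_ne hS0 (Ne.symm hSz)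
          have hApos : 0 < (1 / (M + 1 : ℝ)) * S := by positivity
          have h2 := Real.log_le_sub_one_of_pos (inv_pos.mpr hApos)
          rw [Real.log_inv] at h2
          have h3 : 1 - ((1 / (M + 1 : ℝ)) * S)⁻¹ ≤
              Real.log ((1 / (M + 1 : ℝ)) * S) := by linarith
          exact mul_le_mul_of_nonneg_left h3 (hnd0 v)
      have hInt2 : Integrable (fun v : Fin n → Θ => numDens p q M v *
          (1 - ((1 / (M + 1 : ℝ)) * ∑ k, p (v k) / q (v k))⁻¹)) pm := by
        have heq : (fun v : Fin n → Θ => numDens p q M v *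
            (1 - ((1 / (M + 1 : ℝ)) * ∑ k, p (v k) / q (v k))⁻¹))
            = fun v => numDens p q M v - numDens p q M v *
              ((1 / (M + 1 : ℝ)) * ∑ k, p (v k) / q (v k))⁻¹ := by
          funext v; ring
        rw [heq]
        exact hnumInt.sub hndAinv_int
      have h1 : ∫ v, numDens p q M v *
          (1 - ((1 / (M + 1 : ℝ)) * ∑ k, p (v k) / q (v k))⁻¹) ∂pm ≤
          ∫ v, numDens p q M v *
            Real.log ((1 / (M + 1 : ℝ)) * ∑ k, p (v k) / q (v k)) ∂pm :=
        integral_mono_ae hInt2 (hint M) hmono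
      have h2 : ∫ v, numDens p q M v *
          (1 - ((1 / (M + 1 : ℝ)) * ∑ k, p (v k) / q (v k))⁻¹) ∂pm
          = 1 - ∫ v, numDens p q M v *
            ((1 / (M + 1 : ℝ)) * ∑ k, p (v k) / q (v k))⁻¹ ∂pm := by
        have heq : (fun v : Fin n → Θ => numDens p q M v *
            (1 - ((1 / (M + 1 : ℝ)) * ∑ k, p (v k) / q (v k))⁻¹))
            = fun v => numDens p q M v - numDens p q M v *
              ((1 / (M + 1 : ℝ)) * ∑ k, p (v k) / q (v k))⁻¹ := by
          funext v; ring
        rw [heq, integral_sub hnumInt hndAinv_int, hnumint1]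
      linarith [hndAinv_integral]
    ------------------------------------------------------------------
    -- conclude both bounds
    ------------------------------------------------------------------
    constructor
    · rw [Delta]
      have halg : (1 / (M + 1 : ℝ)) * (C + M) - 1 = (C - 1) * (1 / (M + 1 : ℝ)) := by
        field_simp
        ring
      have := hup
      rw [halg] at this
      linarith
    · rw [Delta]
      linarith [hlow]
  -- squeeze
  have hlim : Tendsto (fun M : ℕ => -((C - 1) * (1 / (M + 1 : ℝ)))) atTop (nhds 0) := by
    have := (tendsto_one_div_add_atTop_nhds_zero_nat.const_mul (C - 1)).neg
    simpa using this
  exact tendsto_of_tendsto_of_tendsto_of_le_of_le hlim tendsto_const_nhds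
    (fun M => (key M).1) (fun M => (key M).2)
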